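/- (Monotonicity for simplex interpolation) Let θ : {0,1}^D → ℝ satisfy θ(v') ≥ θ(v) for every pair of adjacent vertices v, v' with v[d]=0, v'[d]=1, v[m]=v'[m] for m≠d. Then the simplex-interpolated function f(x) = ∑_{k=0}^D ψ_k(x) θ(u_k(x)) (where ψ_k and u_k are the simplex interpolation weights and vertices for x) is monotonically nondecreasing in coordinate d on [0,1]^D. -/

import Mathlib

/-- Sorted coordinate sequence with sentinels: `sSeq D x π 0 = 1`,
`sSeq D x π k = x (π (k-1))` for `1 ≤ k ≤ D`, and `0` for `k > D`. -/
def sSeq (D : ℕ) (x : Fin D → ℝ) (π : Equiv.Perm (Fin D)) (k : ℕ) : ℝ :=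
  if h : 1 ≤ k ∧ k ≤ D then x (π ⟨k - 1, by omega⟩) else if k = 0 then 1 else 0

/-- The `k`-th vertex of the simplex associated with sorting permutation `π`:
ones in the first `k` sorted coordinates. -/
def simplexVertex (D : ℕ) (π : Equiv.Perm (Fin D)) (k : ℕ) : Fin D → Bool :=
  fun i => decide ((π.symm i : ℕ) < k)

theorem stmt_14 (D : ℕ) (θ : (Fin D → Bool) → ℝ) (d : Fin D)
    (hθ : ∀ v v' : Fin D → Bool, v d = false → v' d = true →
      (∀ m, m ≠ d → v m = v' m) → θ v ≤ θ v')
    (f : (Fin D → ℝ) → ℝ)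
    (hf : ∀ x : Fin D → ℝ, (∀ i, x i ∈ Set.Icc (0:ℝ) 1) →
      ∀ π : Equiv.Perm (Fin D), (∀ i j : Fin D, i ≤ j → x (π j) ≤ x (π i)) →
        f x = ∑ k ∈ Finset.range (D + 1),
          (sSeq D x π k - sSeq D x π (k + 1)) * θ (simplexVertex D π k)) :
    ∀ x x' : Fin D → ℝ,
      (∀ i, x i ∈ Set.Icc (0:ℝ) 1) → (∀ i, x' i ∈ Set.Icc (0:ℝ) 1) →
      x d ≤ x' d → (∀ m, m ≠ d → x m = x' m) → f x ≤ f x' := by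
  -- one-step lemma: raising coordinate d to b with no other coordinate strictly in between
  have onestep : ∀ x : Fin D → ℝ, (∀ i, x i ∈ Set.Icc (0:ℝ) 1) →
      ∀ b : ℝ, b ∈ Set.Icc (0:ℝ) 1 → x d ≤ b →
      (∀ m, m ≠ d → ¬(x d < x m ∧ x m < b)) →
      f x ≤ f (Function.update x d b) := by
    intro x hx b hb hxd hno
    set x' : Fin D → ℝ := Function.update x d b with hx'def
    have hx'd : x' d = b := Function.update_self d b x
    have hx'm : ∀ m, m ≠ d → x' m = x m := fun m hm => Function.update_of_ne hm b x
    have hx' : ∀ i, x' i ∈ Set.Icc (0:ℝ) 1 := by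
      intro i
      by_cases h : i = d
      · subst h; rw [hx'd]; exact hb
      · rw [hx'm i h]; exact hx i
    set g : Fin D → ℝ := fun i => -(x i + x' i) with hgdef
    set π : Equiv.Perm (Fin D) := Tuple.sort g with hπdef
    have hmono : Monotone (g ∘ π) := Tuple.monotone_sort g
    -- key sorting claim
    have claim : ∀ p q : Fin D, g p ≤ g q → x q ≤ x p ∧ x' q ≤ x' p := by
      intro p q hg
      simp only [hgdef] at hg
      by_cases hp : p = d <;> by_cases hq : q = d
      · subst hp; subst hq; exact ⟨le_rfl, le_rfl⟩
      · subst hp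
        rw [hx'd, hx'm q hq] at hg ⊢
        rcases not_and_or.mp (hno q hq) with h | h
        · push_neg at h; constructor <;> linarith
        · push_neg at h; constructor <;> linarith
      · subst hq
        rw [hx'd, hx'm p hp] at hg ⊢
        rcases not_and_or.mp (hno p hp) with h | h
        · push_neg at h; constructor <;> linarith
        · push_neg at h; constructor <;> linarith
      · rw [hx'm p hp, hx'm q hq] at hg ⊢
        constructor <;> linarith
    have hsx : ∀ i j : Fin D, i ≤ j → x (π j) ≤ x (π i) := fun i j hij =>
      (claim (π i) (π j) (hmono hij)).1
    have hsx' : ∀ i j : Fin D, i ≤ j → x' (π j) ≤ x' (π i) := fun i j hij =>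
      (claim (π i) (π j) (hmono hij)).2
    set j : ℕ := (π.symm d : ℕ) with hjdef
    have hj : j < D := (π.symm d).is_lt
    have hss : ∀ k, sSeq D x' π k = sSeq D x π k + (if k = j + 1 then b - x d else 0) := by
      intro k
      unfold sSeq
      by_cases h : 1 ≤ k ∧ k ≤ D
      · rw [dif_pos h, dif_pos h]
        by_cases hk : k = j + 1
        · have hidx : (⟨k - 1, by omega⟩ : Fin D) = π.symm d := by
            apply Fin.ext; simp [hk, hjdef]
          rw [hidx, Equiv.apply_symm_apply, if_pos hk, hx'd]
          ring
        · have hne : π ⟨k - 1, by omega⟩ ≠ d := by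
            intro hcon
            apply hk
            have : (⟨k - 1, by omega⟩ : Fin D) = π.symm d := by
              rw [← hcon, Equiv.symm_apply_apply]
            have := congrArg Fin.val this
            simp at this
            omega
          rw [if_neg hk, hx'm _ hne, add_zero]
      · have hne : k ≠ j + 1 := by omega
        rw [dif_neg h, dif_neg h, if_neg hne, add_zero]
    have hkey : f x' - f x
        = (b - x d) * θ (simplexVertex D π (j + 1))
          - (b - x d) * θ (simplexVertex D π j) := by
      rw [hf x' hx' π hsx', hf x hx π hsx, ← Finset.sum_sub_distrib]
      have hterm : ∀ k ∈ Finset.range (D + 1),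
          (sSeq D x' π k - sSeq D x' π (k + 1)) * θ (simplexVertex D π k)
            - (sSeq D x π k - sSeq D x π (k + 1)) * θ (simplexVertex D π k)
          = (if k = j + 1 then (b - x d) * θ (simplexVertex D π k) else 0)
            - (if k = j then (b - x d) * θ (simplexVertex D π k) else 0) := by
        intro k _
        rw [hss k, hss (k + 1)]
        by_cases h1 : k = j + 1 <;> by_cases h2 : k = j
        · omega
        · have : k + 1 ≠ j + 1 := by omega
          rw [if_pos h1, if_neg this, if_pos h1, if_neg h2]
          ring
        · have : k + 1 = j + 1 := by omega
          rw [if_neg h1, if_pos this, if_neg h1, if_pos h2]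
          ring
        · have : k + 1 ≠ j + 1 := by omega
          rw [if_neg h1, if_neg this, if_neg h1, if_neg h2]
          ring
      rw [Finset.sum_congr rfl hterm, Finset.sum_sub_distrib,
        Finset.sum_ite_eq' (Finset.range (D + 1)) (j + 1)
          (fun k => (b - x d) * θ (simplexVertex D π k)),
        Finset.sum_ite_eq' (Finset.range (D + 1)) j
          (fun k => (b - x d) * θ (simplexVertex D π k)),
        if_pos (Finset.mem_range.mpr (by omega)),
        if_pos (Finset.mem_range.mpr (by omega))]
    have hθle : θ (simplexVertex D π j) ≤ θ (simplexVertex D π (j + 1)) := by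
      apply hθ
      · simp [simplexVertex, hjdef]
      · simp [simplexVertex, hjdef]
      · intro m hm
        have hne : (π.symm m : ℕ) ≠ j := by
          intro hcon
          apply hm
          have : π.symm m = π.symm d := Fin.ext hcon
          exact π.symm.injective this
        simp only [simplexVertex, decide_eq_decide]
        omega
    nlinarith [mul_nonneg (sub_nonneg.mpr hxd) (sub_nonneg.mpr hθle)]
  -- if no coordinate strictly in between, done directly
  have empt : ∀ x x' : Fin D → ℝ,
      (∀ m, m ≠ d → ¬(x d < x m ∧ x m < x' d)) →
      (∀ i, x i ∈ Set.Icc (0:ℝ) 1) → (∀ i, x' i ∈ Set.Icc (0:ℝ) 1) →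
      x d ≤ x' d → (∀ m, m ≠ d → x m = x' m) → f x ≤ f x' := by
    intro x x' hno hx hx' hle heq
    have hx'eq : x' = Function.update x d (x' d) := by
      funext m
      by_cases h : m = d
      · subst h; rw [Function.update_self]
      · rw [Function.update_of_ne h, heq m h]
    rw [hx'eq]
    exact onestep x hx (x' d) (hx' d) hle hno
  -- strong induction on the number of coordinates strictly between x d and x' d
  have main : ∀ n : ℕ, ∀ x x' : Fin D → ℝ,
      (Finset.univ.filter (fun m => m ≠ d ∧ x d < x m ∧ x m < x' d)).card ≤ n →
      (∀ i, x i ∈ Set.Icc (0:ℝ) 1) → (∀ i, x' i ∈ Set.Icc (0:ℝ) 1) →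
      x d ≤ x' d → (∀ m, m ≠ d → x m = x' m) → f x ≤ f x' := by
    intro n
    induction n with
    | zero =>
      intro x x' hcard hx hx' hle heq
      apply empt x x' _ hx hx' hle heq
      intro m hm hcon
      have : m ∈ Finset.univ.filter (fun m => m ≠ d ∧ x d < x m ∧ x m < x' d) := by
        simp [hm, hcon.1, hcon.2]
      have := Finset.card_pos.mpr ⟨m, this⟩
      omega
    | succ n ih =>
      intro x x' hcard hx hx' hle heq
      by_cases hS : (Finset.univ.filter (fun m => m ≠ d ∧ x d < x m ∧ x m < x' d)).Nonempty
      · obtain ⟨m, hm⟩ := hS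
        rw [Finset.mem_filter] at hm
        obtain ⟨-, hmd, hm1, hm2⟩ := hm
        set x'' : Fin D → ℝ := Function.update x d (x m) with hx''def
        have hx''d : x'' d = x m := Function.update_self d (x m) x
        have hx''m : ∀ m', m' ≠ d → x'' m' = x m' := fun m' h => Function.update_of_ne h _ x
        have hx'' : ∀ i, x'' i ∈ Set.Icc (0:ℝ) 1 := by
          intro i
          by_cases h : i = d
          · subst h; rw [hx''d]; exact hx m
          · rw [hx''m i h]; exact hx i
        have hsub1 : (Finset.univ.filter (fun m' => m' ≠ d ∧ x d < x m' ∧ x m' < x'' d))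
            ⊆ (Finset.univ.filter (fun m' => m' ≠ d ∧ x d < x m' ∧ x m' < x' d)).erase m := by
          intro m' hm'
          rw [Finset.mem_filter] at hm'
          obtain ⟨-, h1, h2, h3⟩ := hm'
          rw [hx''d] at h3
          rw [Finset.mem_erase, Finset.mem_filter]
          exact ⟨fun hc => absurd (hc ▸ h3) (lt_irrefl _), Finset.mem_univ _,
            h1, h2, h3.trans hm2⟩
        have hsub2 : (Finset.univ.filter (fun m' => m' ≠ d ∧ x'' d < x'' m' ∧ x'' m' < x' d))
            ⊆ (Finset.univ.filter (fun m' => m' ≠ d ∧ x d < x m' ∧ x m' < x' d)).erase m := by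
          intro m' hm'
          rw [Finset.mem_filter] at hm'
          obtain ⟨-, h1, h2, h3⟩ := hm'
          rw [hx''d, hx''m m' h1] at h2
          rw [hx''m m' h1] at h3
          rw [Finset.mem_erase, Finset.mem_filter]
          exact ⟨fun hc => absurd (hc ▸ h2) (lt_irrefl _), Finset.mem_univ _,
            h1, hm1.trans h2, h3⟩
        have hmmem : m ∈ Finset.univ.filter (fun m' => m' ≠ d ∧ x d < x m' ∧ x m' < x' d) := by
          simp [hmd, hm1, hm2]
        have hcard' := Finset.card_erase_of_mem hmmem
        have hc1 := Finset.card_le_card hsub1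
        have hc2 := Finset.card_le_card hsub2
        have h1 : f x ≤ f x'' := by
          apply ih x x'' (by omega) hx hx'' (by rw [hx''d]; exact le_of_lt hm1)
          intro m' h; exact (hx''m m' h).symm
        have h2 : f x'' ≤ f x' := by
          apply ih x'' x' (by omega) hx'' hx' (by rw [hx''d]; exact le_of_lt hm2)
          intro m' h; rw [hx''m m' h]; exact heq m' h
        exact h1.trans h2
      · rw [Finset.not_nonempty_iff_eq_empty] at hS
        apply empt x x' _ hx hx' hle heq
        intro m hm hcon
        have : m ∈ Finset.univ.filter (fun m => m ≠ d ∧ x d < x m ∧ x m < x' d) := by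
          simp [hm, hcon.1, hcon.2]
        rw [hS] at this
        exact absurd this (Finset.notMem_empty m)
  intro x x' hx hx' hle heq
  exact main _ x x' le_rfl hx hx' hle heq
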